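/- (Attainment of the global minimum.) Under the cluster-centric DGP, the choice h = id restricted to S^{d-1}, w_i = v_{𝒞(i)} for all i ∈ I, and β = κ satisfies β⟨w_i − w_k, h(z)⟩ = κ⟨v_{𝒞(i)} − v_{𝒞(k)}, z⟩ for all i, k ∈ I and all z ∈ S^{d-1}, and therefore globally minimizes the latent DIET objective L_z(h, W, β) = E_{(z,I)}[ −ln( exp(β⟨w_I, h(z)⟩) / Σ_{j∈I} exp(β⟨w_j, h(z)⟩) ) ] over all continuous h: S^{d-1} → R^d, all heads W, and all β > 0. -/

import Mathlib

open MeasureTheory Metric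
open scoped RealInnerProductSpace BigOperators

/-- The uniform (surface) measure on the unit sphere of `ℝ^d`, obtained from the
Lebesgue measure on `EuclideanSpace ℝ (Fin d)`. -/
noncomputable def sphereUniform (d : ℕ) :
    Measure (Metric.sphere (0 : EuclideanSpace ℝ (Fin d)) 1) :=
  (volume : Measure (EuclideanSpace ℝ (Fin d))).toSphere

/-- A finite system of vectors is an *affine generator system* of `ℝ^d` if every vector
is a linear combination of the system with coefficients summing to `1`. -/
def IsAffineGenerator {d : ℕ} {ι : Type} [Fintype ι]
    (v : ι → EuclideanSpace ℝ (Fin d)) : Prop :=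
  ∀ x : EuclideanSpace ℝ (Fin d), ∃ α : ι → ℝ,
    (∑ c, α c = 1) ∧ x = ∑ c, α c • v c

/-- The latent DIET objective
`L_z(h, W, β) = E_{(z,I)}[ −ln( exp(β⟨w_I, h z⟩) / Σ_j exp(β⟨w_j, h z⟩) ) ]`,
where the instance label is uniform on `Idx` and, conditionally on the label `i`, the
latent `z` is distributed on the unit sphere according to the von Mises–Fisher density
proportional to `exp (κ ⟪v (Cl i), z⟫)` with respect to the uniform (surface) measure. -/
noncomputable def dietLossZ (d : ℕ) {Cset Idx : Type} [Fintype Idx]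
    (v : Cset → EuclideanSpace ℝ (Fin d)) (κ : ℝ) (Cl : Idx → Cset)
    (h : Metric.sphere (0 : EuclideanSpace ℝ (Fin d)) 1 → EuclideanSpace ℝ (Fin d))
    (w : Idx → EuclideanSpace ℝ (Fin d)) (β : ℝ) : ℝ :=
  (Fintype.card Idx : ℝ)⁻¹ * ∑ i : Idx,
    ((∫ z : Metric.sphere (0 : EuclideanSpace ℝ (Fin d)) 1,
        Real.exp (κ * ⟪v (Cl i), (z : EuclideanSpace ℝ (Fin d))⟫)
        ∂(sphereUniform d))⁻¹ *
      ∫ z : Metric.sphere (0 : EuclideanSpace ℝ (Fin d)) 1,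
        Real.exp (κ * ⟪v (Cl i), (z : EuclideanSpace ℝ (Fin d))⟫) *
          (- Real.log (Real.exp (β * ⟪w i, h z⟫) /
            ∑ j : Idx, Real.exp (β * ⟪w j, h z⟫)))
        ∂(sphereUniform d))

open scoped Pointwise
section SphereMap
variable {d : ℕ}

/-- The map of the unit sphere induced by a linear isometry equivalence. -/
noncomputable def sphereMapFun (e : EuclideanSpace ℝ (Fin d) ≃ₗᵢ[ℝ] EuclideanSpace ℝ (Fin d))
    (z : Metric.sphere (0 : EuclideanSpace ℝ (Fin d)) 1) :
    Metric.sphere (0 : EuclideanSpace ℝ (Fin d)) 1 :=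
  ⟨e z, by
    rw [mem_sphere_zero_iff_norm, e.norm_map]
    exact mem_sphere_zero_iff_norm.mp z.2⟩

/-- The homeomorphism of the unit sphere induced by a linear isometry equivalence. -/
noncomputable def sphereHomeo (e : EuclideanSpace ℝ (Fin d) ≃ₗᵢ[ℝ] EuclideanSpace ℝ (Fin d)) :
    Metric.sphere (0 : EuclideanSpace ℝ (Fin d)) 1 ≃ₜ
      Metric.sphere (0 : EuclideanSpace ℝ (Fin d)) 1 where
  toFun := sphereMapFun e
  invFun := sphereMapFun e.symm
  left_inv z := Subtype.ext (e.symm_apply_apply _)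
  right_inv z := Subtype.ext (e.apply_symm_apply _)
  continuous_toFun := (e.continuous.comp continuous_subtype_val).subtype_mk _
  continuous_invFun := (e.symm.continuous.comp continuous_subtype_val).subtype_mk _

lemma sphereHomeo_measurePreserving
    (e : EuclideanSpace ℝ (Fin d) ≃ₗᵢ[ℝ] EuclideanSpace ℝ (Fin d)) :
    MeasurePreserving (sphereHomeo e) (sphereUniform d) (sphereUniform d) := by
  refine ⟨(sphereHomeo e).continuous.measurable, ?_⟩
  ext s hs
  rw [Measure.map_apply (sphereHomeo e).continuous.measurable hs, sphereUniform,
    Measure.toSphere_apply' _ ((sphereHomeo e).continuous.measurable hs),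
    Measure.toSphere_apply' _ hs]
  congr 1
  have h1 : (Subtype.val '' ((sphereHomeo e) ⁻¹' s) : Set (EuclideanSpace ℝ (Fin d)))
      = e ⁻¹' (Subtype.val '' s) := by
    ext x
    constructor
    · rintro ⟨z, hz, rfl⟩
      exact ⟨sphereHomeo e z, hz, rfl⟩
    · rintro ⟨y, hy, hxy⟩
      have hx : x ∈ Metric.sphere (0 : EuclideanSpace ℝ (Fin d)) 1 := by
        rw [mem_sphere_zero_iff_norm, ← e.norm_map, ← hxy]
        exact mem_sphere_zero_iff_norm.mp y.2
      refine ⟨⟨x, hx⟩, ?_, rfl⟩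
      have hsy : sphereHomeo e ⟨x, hx⟩ = y := Subtype.ext hxy.symm
      simp only [Set.mem_preimage, hsy]
      exact hy
  have h2 : Set.Ioo (0:ℝ) 1 • (e ⁻¹' (Subtype.val '' s))
      = e ⁻¹' (Set.Ioo (0:ℝ) 1 • (Subtype.val '' s)) := by
    ext x
    constructor
    · rintro ⟨r, hr, y, hy, rfl⟩
      exact ⟨r, hr, e y, hy, (e.map_smul r y).symm⟩
    · rintro ⟨r, hr, a, ha, hra⟩
      have hx2 : e x = r • a := hra.symm
      have hxx : x = r • e.symm a := by
        have h3 := congrArg e.symm hx2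
        rwa [e.symm_apply_apply, e.symm.map_smul] at h3
      exact ⟨r, hr, e.symm a, by simpa using ha, hxx.symm⟩
  rw [h1, h2]
  exact e.measurePreserving.measure_preimage_emb
    e.toHomeomorph.measurableEmbedding _

lemma integral_exp_inner_sphere_eq (u u' : EuclideanSpace ℝ (Fin d))
    (hn : ‖u‖ = ‖u'‖) (κ : ℝ) :
    ∫ z : Metric.sphere (0 : EuclideanSpace ℝ (Fin d)) 1,
        Real.exp (κ * ⟪u, (z : EuclideanSpace ℝ (Fin d))⟫) ∂(sphereUniform d) =
    ∫ z : Metric.sphere (0 : EuclideanSpace ℝ (Fin d)) 1,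
        Real.exp (κ * ⟪u', (z : EuclideanSpace ℝ (Fin d))⟫) ∂(sphereUniform d) := by
  set e : EuclideanSpace ℝ (Fin d) ≃ₗᵢ[ℝ] EuclideanSpace ℝ (Fin d) :=
    Submodule.reflection (ℝ ∙ (u - u'))ᗮ with he
  have heu : e u = u' := Submodule.reflection_sub hn
  have := (sphereHomeo_measurePreserving e).integral_comp
    (sphereHomeo e).measurableEmbedding
    (fun z : Metric.sphere (0 : EuclideanSpace ℝ (Fin d)) 1 =>
      Real.exp (κ * ⟪u', (z : EuclideanSpace ℝ (Fin d))⟫))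
  rw [← this]
  refine integral_congr_ae (Filter.Eventually.of_forall fun z => ?_)
  show Real.exp (κ * ⟪u, (z : EuclideanSpace ℝ (Fin d))⟫) =
    Real.exp (κ * ⟪u', e (z : EuclideanSpace ℝ (Fin d))⟫)
  rw [← heu, e.inner_map_map]

end SphereMap

lemma gibbs_ineq {ι : Type*} [Fintype ι] (a q : ι → ℝ) (ha : ∀ i, 0 < a i)
    (hq : ∀ i, 0 < q i) (hqs : ∑ i, q i = 1) :
    ∑ i, a i * (-Real.log (a i / ∑ j, a j)) ≤ ∑ i, a i * (-Real.log (q i)) := by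
  cases isEmpty_or_nonempty ι with
  | inl h => haveI := h; rw [Finset.univ_eq_empty, Finset.sum_empty, Finset.sum_empty]
  | inr h =>
    have hT : 0 < ∑ j, a j := Finset.sum_pos (fun i _ => ha i) Finset.univ_nonempty
    have key : ∀ i, a i * (-Real.log (a i / ∑ j, a j)) ≤
        a i * (-Real.log (q i)) + (q i * (∑ j, a j) - a i) := by
      intro i
      have hlog : Real.log (q i * (∑ j, a j) / a i) ≤ q i * (∑ j, a j) / a i - 1 :=
        Real.log_le_sub_one_of_pos (div_pos (mul_pos (hq i) hT) (ha i))
      have hsplit : -Real.log (a i / ∑ j, a j) =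
          -Real.log (q i) + Real.log (q i * (∑ j, a j) / a i) := by
        rw [Real.log_div (ne_of_gt (ha i)) (ne_of_gt hT),
          Real.log_div (ne_of_gt (mul_pos (hq i) hT)) (ne_of_gt (ha i)),
          Real.log_mul (ne_of_gt (hq i)) (ne_of_gt hT)]
        ring
      rw [hsplit, mul_add]
      have h2 : a i * Real.log (q i * (∑ j, a j) / a i) ≤ q i * (∑ j, a j) - a i := by
        calc a i * Real.log (q i * (∑ j, a j) / a i)
            ≤ a i * (q i * (∑ j, a j) / a i - 1) :=
              mul_le_mul_of_nonneg_left hlog (ha i).le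
          _ = q i * (∑ j, a j) - a i := by field_simp [(ha i).ne']
      linarith
    calc ∑ i, a i * (-Real.log (a i / ∑ j, a j))
        ≤ ∑ i, (a i * (-Real.log (q i)) + (q i * (∑ j, a j) - a i)) :=
          Finset.sum_le_sum (fun i _ => key i)
      _ = ∑ i, a i * (-Real.log (q i)) +
          ((∑ i, q i) * (∑ j, a j) - ∑ i, a i) := by
          rw [Finset.sum_add_distrib, Finset.sum_sub_distrib, ← Finset.sum_mul]
      _ = ∑ i, a i * (-Real.log (q i)) := by rw [hqs, one_mul]; ring

/-- **Attainment of the global minimum.** The choice `h = id` (the inclusion of the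
sphere), `w i = v (𝒞 i)` and `β = κ` satisfies the optimality equation
`β ⟨w i − w k, h z⟩ = κ ⟨v_{𝒞(i)} − v_{𝒞(k)}, z⟩` and globally minimizes the latent DIET
objective over all continuous `h`, all heads `W` and all `β > 0`. -/
theorem dietLossZ_attained
    {d : ℕ} {Cset Idx : Type} [Fintype Cset] [Fintype Idx]
    (v : Cset → EuclideanSpace ℝ (Fin d))
    (hv_norm : ∀ c, ‖v c‖ = 1)
    (hv_gen : IsAffineGenerator v)
    (Cl : Idx → Cset) (hCl : Function.Surjective Cl)
    (κ : ℝ) (hκ : 0 < κ) :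
    (∀ i k : Idx, ∀ z : Metric.sphere (0 : EuclideanSpace ℝ (Fin d)) 1,
      κ * ⟪v (Cl i) - v (Cl k), ((z : EuclideanSpace ℝ (Fin d)))⟫ =
        κ * ⟪v (Cl i) - v (Cl k), (z : EuclideanSpace ℝ (Fin d))⟫) ∧
    (∀ (h' : Metric.sphere (0 : EuclideanSpace ℝ (Fin d)) 1 → EuclideanSpace ℝ (Fin d))
      (w' : Idx → EuclideanSpace ℝ (Fin d)) (β' : ℝ), Continuous h' → 0 < β' →
      dietLossZ d v κ Cl (fun z => (z : EuclideanSpace ℝ (Fin d))) (fun i => v (Cl i)) κ ≤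
        dietLossZ d v κ Cl h' w' β') := by
  classical
  refine ⟨fun _ _ _ => rfl, ?_⟩
  intro h' w' β' hc' hβ'
  cases isEmpty_or_nonempty Idx with
  | inl hI =>
      simp [dietLossZ, Finset.univ_eq_empty]
  | inr hI =>
      -- notation
      set μ := sphereUniform d with hμ
      haveI : IsFiniteMeasure μ := by
        rw [hμ]; unfold sphereUniform; infer_instance
      -- continuity facts
      have hfc : ∀ c : Cset, Continuous (fun z : Metric.sphere (0 : EuclideanSpace ℝ (Fin d)) 1 =>
          Real.exp (κ * ⟪v c, (z : EuclideanSpace ℝ (Fin d))⟫)) := fun c =>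
        Real.continuous_exp.comp (continuous_const.mul
          (Continuous.inner continuous_const continuous_subtype_val))
      have hgc : ∀ i : Idx, Continuous (fun z : Metric.sphere (0 : EuclideanSpace ℝ (Fin d)) 1 =>
          Real.exp (β' * ⟪w' i, h' z⟫)) := fun i =>
        Real.continuous_exp.comp (continuous_const.mul
          (Continuous.inner continuous_const hc'))
      have hTc : Continuous (fun z : Metric.sphere (0 : EuclideanSpace ℝ (Fin d)) 1 =>
          ∑ j : Idx, Real.exp (κ * ⟪v (Cl j), (z : EuclideanSpace ℝ (Fin d))⟫)) :=
        continuous_finset_sum _ (fun j _ => hfc (Cl j))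
      have hTqc : Continuous (fun z : Metric.sphere (0 : EuclideanSpace ℝ (Fin d)) 1 =>
          ∑ j : Idx, Real.exp (β' * ⟪w' j, h' z⟫)) :=
        continuous_finset_sum _ (fun j _ => hgc j)
      have hTpos : ∀ z : Metric.sphere (0 : EuclideanSpace ℝ (Fin d)) 1,
          0 < ∑ j : Idx, Real.exp (κ * ⟪v (Cl j), (z : EuclideanSpace ℝ (Fin d))⟫) := fun z =>
        Finset.sum_pos (fun j _ => Real.exp_pos _) Finset.univ_nonempty
      have hTqpos : ∀ z : Metric.sphere (0 : EuclideanSpace ℝ (Fin d)) 1,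
          0 < ∑ j : Idx, Real.exp (β' * ⟪w' j, h' z⟫) := fun z =>
        Finset.sum_pos (fun j _ => Real.exp_pos _) Finset.univ_nonempty
      -- integrability of the two families of integrands
      have hint1 : ∀ i : Idx, Integrable (fun z : Metric.sphere (0 : EuclideanSpace ℝ (Fin d)) 1 =>
          Real.exp (κ * ⟪v (Cl i), (z : EuclideanSpace ℝ (Fin d))⟫) *
            (-Real.log (Real.exp (κ * ⟪v (Cl i), (z : EuclideanSpace ℝ (Fin d))⟫) /
              ∑ j : Idx, Real.exp (κ * ⟪v (Cl j), (z : EuclideanSpace ℝ (Fin d))⟫)))) μ := by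
        intro i
        have hcont : Continuous (fun z : Metric.sphere (0 : EuclideanSpace ℝ (Fin d)) 1 =>
            Real.exp (κ * ⟪v (Cl i), (z : EuclideanSpace ℝ (Fin d))⟫) *
              (-Real.log (Real.exp (κ * ⟪v (Cl i), (z : EuclideanSpace ℝ (Fin d))⟫) /
                ∑ j : Idx, Real.exp (κ * ⟪v (Cl j), (z : EuclideanSpace ℝ (Fin d))⟫)))) := by
          refine (hfc (Cl i)).mul (Continuous.neg ?_)
          exact Continuous.log ((hfc (Cl i)).div hTc (fun z => (hTpos z).ne'))
            (fun z => (div_pos (Real.exp_pos _) (hTpos z)).ne')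
        exact hcont.integrable_of_hasCompactSupport (isClosed_tsupport _).isCompact
      have hint2 : ∀ i : Idx, Integrable (fun z : Metric.sphere (0 : EuclideanSpace ℝ (Fin d)) 1 =>
          Real.exp (κ * ⟪v (Cl i), (z : EuclideanSpace ℝ (Fin d))⟫) *
            (-Real.log (Real.exp (β' * ⟪w' i, h' z⟫) /
              ∑ j : Idx, Real.exp (β' * ⟪w' j, h' z⟫)))) μ := by
        intro i
        have hcont : Continuous (fun z : Metric.sphere (0 : EuclideanSpace ℝ (Fin d)) 1 =>
            Real.exp (κ * ⟪v (Cl i), (z : EuclideanSpace ℝ (Fin d))⟫) *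
              (-Real.log (Real.exp (β' * ⟪w' i, h' z⟫) /
                ∑ j : Idx, Real.exp (β' * ⟪w' j, h' z⟫)))) := by
          refine (hfc (Cl i)).mul (Continuous.neg ?_)
          exact Continuous.log ((hgc i).div hTqc (fun z => (hTqpos z).ne'))
            (fun z => (div_pos (Real.exp_pos _) (hTqpos z)).ne')
        exact hcont.integrable_of_hasCompactSupport (isClosed_tsupport _).isCompact
      -- the normalizing constants all agree
      obtain ⟨i0⟩ := hI
      have hZ : ∀ i : Idx,
          (∫ z : Metric.sphere (0 : EuclideanSpace ℝ (Fin d)) 1,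
            Real.exp (κ * ⟪v (Cl i), (z : EuclideanSpace ℝ (Fin d))⟫) ∂μ) =
          ∫ z : Metric.sphere (0 : EuclideanSpace ℝ (Fin d)) 1,
            Real.exp (κ * ⟪v (Cl i0), (z : EuclideanSpace ℝ (Fin d))⟫) ∂μ := fun i =>
        integral_exp_inner_sphere_eq _ _ (by rw [hv_norm, hv_norm]) κ
      have hZ0 : 0 ≤ ∫ z : Metric.sphere (0 : EuclideanSpace ℝ (Fin d)) 1,
          Real.exp (κ * ⟪v (Cl i0), (z : EuclideanSpace ℝ (Fin d))⟫) ∂μ :=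
        integral_nonneg (fun z => (Real.exp_pos _).le)
      -- unfold and reduce to a single integral inequality
      simp only [dietLossZ]
      refine mul_le_mul_of_nonneg_left ?_ (by positivity)
      have hfac : ∀ (B : Idx → ℝ),
          ∑ i : Idx, ((∫ z : Metric.sphere (0 : EuclideanSpace ℝ (Fin d)) 1,
              Real.exp (κ * ⟪v (Cl i), (z : EuclideanSpace ℝ (Fin d))⟫) ∂μ)⁻¹ * B i) =
          (∫ z : Metric.sphere (0 : EuclideanSpace ℝ (Fin d)) 1,
              Real.exp (κ * ⟪v (Cl i0), (z : EuclideanSpace ℝ (Fin d))⟫) ∂μ)⁻¹ *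
            ∑ i : Idx, B i := by
        intro B
        rw [Finset.mul_sum]
        exact Finset.sum_congr rfl fun i _ => by rw [hZ i]
      rw [hfac, hfac]
      refine mul_le_mul_of_nonneg_left ?_ (inv_nonneg.mpr hZ0)
      rw [← integral_finset_sum _ (fun i _ => hint1 i),
        ← integral_finset_sum _ (fun i _ => hint2 i)]
      refine integral_mono (integrable_finset_sum _ (fun i _ => hint1 i))
        (integrable_finset_sum _ (fun i _ => hint2 i)) ?_
      intro z
      refine gibbs_ineq (fun i => Real.exp (κ * ⟪v (Cl i), (z : EuclideanSpace ℝ (Fin d))⟫))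
        (fun i => Real.exp (β' * ⟪w' i, h' z⟫) / ∑ j : Idx, Real.exp (β' * ⟪w' j, h' z⟫))
        (fun i => Real.exp_pos _)
        (fun i => div_pos (Real.exp_pos _) (hTqpos z)) ?_
      rw [← Finset.sum_div, div_self (hTqpos z).ne']
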